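/- For T : [0,1] → ℝ⁺ non-decreasing with x ↦ T(x)/x non-increasing (extended by T(x)=T(1) for x ≥ 1), the function Θ(x) = x / T(1/log(1+1/x)) on (0,∞) is non-decreasing and sub-additive: Θ(x+y) ≤ Θ(x) + Θ(y) for all x, y > 0. -/

import Mathlib

lemma log_one_add_inv_pos {x : ℝ} (hx : 0 < x) : 0 < Real.log (1 + 1 / x) :=
  Real.log_pos (by have := one_div_pos.mpr hx; linarith)

lemma h_mono_aux {x y : ℝ} (hx : 0 < x) (hxy : x ≤ y) :
    1 / Real.log (1 + 1 / x) ≤ 1 / Real.log (1 + 1 / y) := by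
  have hy : 0 < y := lt_of_lt_of_le hx hxy
  have h1 : Real.log (1 + 1 / y) ≤ Real.log (1 + 1 / x) := by
    apply Real.log_le_log (by have := one_div_pos.mpr hy; linarith)
    have := one_div_le_one_div_of_le hx hxy
    linarith
  exact one_div_le_one_div_of_le (log_one_add_inv_pos hy) h1

lemma g_hasDeriv {x : ℝ} (hx : 0 < x) :
    HasDerivAt (fun x : ℝ => x * Real.log (1 + 1 / x))
      (Real.log (1 + 1 / x) - x * ((x ^ 2)⁻¹ / (1 + 1 / x))) x := by
  have hx0 : x ≠ 0 := ne_of_gt hx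
  have h1 : HasDerivAt (fun x : ℝ => 1 + 1 / x) (-(x ^ 2)⁻¹) x := by
    simpa [one_div] using (hasDerivAt_inv hx0).const_add 1
  have hne : 1 + 1 / x ≠ 0 := by
    have := one_div_pos.mpr hx; positivity
  have h3 : HasDerivAt (fun y : ℝ => y * Real.log (1 + 1 / y))
      (1 * Real.log (1 + 1 / x) + x * (-(x ^ 2)⁻¹ / (1 + 1 / x))) x :=
    (hasDerivAt_id x).mul (h1.log hne)
  convert h3 using 1
  ring

lemma g_mono : MonotoneOn (fun x : ℝ => x * Real.log (1 + 1 / x)) (Set.Ioi 0) := by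
  apply monotoneOn_of_deriv_nonneg (convex_Ioi 0)
  · intro x hx
    exact (g_hasDeriv hx).continuousAt.continuousWithinAt
  · intro x hx
    rw [interior_Ioi] at hx
    exact (g_hasDeriv hx).differentiableAt.differentiableWithinAt
  · intro x hx
    rw [interior_Ioi] at hx
    have hx' : (0:ℝ) < x := hx
    rw [(g_hasDeriv hx).deriv]
    have hx1 : (0:ℝ) < 1 / x := one_div_pos.mpr hx
    have hy0 : (0:ℝ) < 1 + 1 / x := by linarith
    have hlog := Real.log_le_sub_one_of_pos (x := (1 + 1/x)⁻¹) (by positivity)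
    rw [Real.log_inv] at hlog
    have h1 : 1 - (1 + 1/x)⁻¹ ≤ Real.log (1 + 1/x) := by linarith
    have hx0 : x ≠ 0 := ne_of_gt hx'
    have h2 : x * ((x ^ 2)⁻¹ / (1 + 1 / x)) = 1 - (1 + 1/x)⁻¹ := by
      rw [eq_sub_iff_add_eq]
      have hx1' : x + 1 ≠ 0 := by positivity
      field_simp
      ring
    rw [h2]
    linarith

theorem Theta_monotone_subadditive (T : ℝ → ℝ)
    (hpos : ∀ x : ℝ, 0 < x → 0 < T x)
    (hmono : MonotoneOn T (Set.Ioi 0))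
    (hanti : AntitoneOn (fun x => T x / x) (Set.Ioc 0 1))
    (hext : ∀ x : ℝ, 1 ≤ x → T x = T 1) :
    MonotoneOn (fun x : ℝ => x / T (1 / Real.log (1 + 1 / x))) (Set.Ioi 0) ∧
    ∀ x y : ℝ, 0 < x → 0 < y →
      (x + y) / T (1 / Real.log (1 + 1 / (x + y)))
        ≤ x / T (1 / Real.log (1 + 1 / x)) + y / T (1 / Real.log (1 + 1 / y)) := by
  have hT1 : 0 < T 1 := hpos 1 one_pos
  -- φ(u) = u / T u is monotone on (0,∞)
  have phi_mono : ∀ u v : ℝ, 0 < u → u ≤ v → u / T u ≤ v / T v := by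
    intro u v hu huv
    have hv : 0 < v := lt_of_lt_of_le hu huv
    have hTu := hpos u hu
    have hTv := hpos v hv
    rcases le_or_gt v 1 with hv1 | hv1
    · have := hanti ⟨hu, le_trans huv hv1⟩ ⟨hv, hv1⟩ huv
      rw [div_le_div_iff₀ hTu hTv]
      rw [div_le_div_iff₀ hv hu] at this
      linarith
    · rw [hext v hv1.le]
      rcases le_or_gt u 1 with hu1 | hu1
      · have h1 := hanti ⟨hu, hu1⟩ ⟨one_pos, le_refl 1⟩ hu1
        simp only [div_one] at h1
        calc u / T u ≤ 1 / T 1 := by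
              rw [div_le_div_iff₀ hTu hT1]
              rw [le_div_iff₀ hu] at h1
              nlinarith
          _ ≤ v / T 1 := by gcongr <;> exact hv1.le
      · rw [hext u hu1.le]
        gcongr
  -- positivity of T ∘ h
  have hTh : ∀ x : ℝ, 0 < x → 0 < T (1 / Real.log (1 + 1 / x)) := fun x hx =>
    hpos _ (one_div_pos.mpr (log_one_add_inv_pos hx))
  -- factorization: Θ(x) = g(x) * φ(h(x))
  have hfact : ∀ x : ℝ, 0 < x →
      x / T (1 / Real.log (1 + 1 / x)) =
        (x * Real.log (1 + 1 / x)) *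
          ((1 / Real.log (1 + 1 / x)) / T (1 / Real.log (1 + 1 / x))) := by
    intro x hx
    have hL := (log_one_add_inv_pos hx).ne'
    have h : x * Real.log (1 + 1 / x) *
        ((1 / Real.log (1 + 1 / x)) / T (1 / Real.log (1 + 1 / x))) =
        x * (Real.log (1 + 1 / x) * (1 / Real.log (1 + 1 / x))) /
          T (1 / Real.log (1 + 1 / x)) := by ring
    rw [h, mul_one_div_cancel hL, mul_one]
  constructor
  · intro a ha b hb hab
    simp only [Set.mem_Ioi] at ha hb
    simp only
    rw [hfact a ha, hfact b hb]
    have hga : 0 ≤ a * Real.log (1 + 1 / a) :=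
      le_of_lt (mul_pos ha (log_one_add_inv_pos ha))
    have hpa : 0 ≤ (1 / Real.log (1 + 1 / a)) / T (1 / Real.log (1 + 1 / a)) :=
      le_of_lt (div_pos (one_div_pos.mpr (log_one_add_inv_pos ha)) (hTh a ha))
    exact mul_le_mul (g_mono ha hb hab)
      (phi_mono _ _ (one_div_pos.mpr (log_one_add_inv_pos ha)) (h_mono_aux ha hab))
      hpa (le_trans hga (g_mono ha hb hab))
  · intro x y hx hy
    have hxy : 0 < x + y := by linarith
    have hmx : 1 / Real.log (1 + 1 / x) ≤ 1 / Real.log (1 + 1 / (x + y)) :=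
      h_mono_aux hx (by linarith)
    have hmy : 1 / Real.log (1 + 1 / y) ≤ 1 / Real.log (1 + 1 / (x + y)) :=
      h_mono_aux hy (by linarith)
    have hTx : T (1 / Real.log (1 + 1 / x)) ≤ T (1 / Real.log (1 + 1 / (x + y))) :=
      hmono (Set.mem_Ioi.mpr (one_div_pos.mpr (log_one_add_inv_pos hx)))
        (Set.mem_Ioi.mpr (one_div_pos.mpr (log_one_add_inv_pos hxy))) hmx
    have hTy : T (1 / Real.log (1 + 1 / y)) ≤ T (1 / Real.log (1 + 1 / (x + y))) :=
      hmono (Set.mem_Ioi.mpr (one_div_pos.mpr (log_one_add_inv_pos hy)))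
        (Set.mem_Ioi.mpr (one_div_pos.mpr (log_one_add_inv_pos hxy))) hmy
    have h1 : (x + y) / T (1 / Real.log (1 + 1 / (x + y)))
        = x / T (1 / Real.log (1 + 1 / (x + y))) + y / T (1 / Real.log (1 + 1 / (x + y))) := by
      rw [add_div]
    rw [h1]
    gcongr
    · exact hpos _ (one_div_pos.mpr (log_one_add_inv_pos hx))
    · exact hpos _ (one_div_pos.mpr (log_one_add_inv_pos hy))
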